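/- Let λ > 0. There exists a constant C = C(λ) > 0 such that for all x ∈ ℝ³∖{0} the steady-state vorticity fundamental solution Φ₀ satisfies |∇Φ₀(x)| ≤ C (|x|^{−2} + |x|^{−3/2} s(λx)^{1/2}) e^{−s(λx)/2}. -/

import Mathlib

open MeasureTheory Real Set

noncomputable section
set_option maxHeartbeats 1000000

/-- Three-dimensional Euclidean space. -/
abbrev E3 : Type := EuclideanSpace ℝ (Fin 3)

/-- The wake function `s(x) = |x| + x₁`. -/
def wake (x : E3) : ℝ := ‖x‖ + x 0

/-- The `j`-th standard basis vector of `ℝ³`. -/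
def e3 (j : Fin 3) : E3 := EuclideanSpace.single j 1

/-- Euclidean norm of a triple of reals. -/
def vnorm (v : Fin 3 → ℝ) : ℝ := Real.sqrt (∑ i, v i ^ 2)

/-- The steady-state vorticity fundamental solution of the Oseen system:
`Φ₀(x) = (4π|x|)⁻¹ e^{−s(λx)/2}`. -/
def Phi0 (lam : ℝ) (x : E3) : ℝ :=
  (4 * Real.pi * ‖x‖)⁻¹ * Real.exp (-(wake (lam • x)) / 2)

lemma norm_hasFDerivAt {x : E3} (hx : x ≠ 0) :
    HasFDerivAt (fun y : E3 => ‖y‖) (innerSL ℝ ((‖x‖⁻¹ : ℝ) • x)) x := by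
  have hnsq : HasFDerivAt (fun y : E3 => ‖y‖ ^ 2) (2 • innerSL ℝ x) x :=
    (hasStrictFDerivAt_norm_sq x).hasFDerivAt
  have hne : ‖x‖ ≠ 0 := norm_ne_zero_iff.mpr hx
  have h2 : (‖x‖ : ℝ) ^ 2 ≠ 0 := pow_ne_zero _ hne
  have h := hnsq.sqrt h2
  have heq : (fun y : E3 => Real.sqrt (‖y‖ ^ 2)) = fun y : E3 => ‖y‖ := by
    funext y; rw [Real.sqrt_sq (norm_nonneg y)]
  rw [heq] at h
  refine h.congr_fderiv ?_
  rw [Real.sqrt_sq (norm_nonneg x)]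
  ext v
  simp [real_inner_smul_left]
  ring

lemma coord_hasFDerivAt (x : E3) :
    HasFDerivAt (fun y : E3 => y 0) (innerSL ℝ (EuclideanSpace.single (0 : Fin 3) (1:ℝ))) x := by
  have h := (EuclideanSpace.proj (𝕜 := ℝ) (0 : Fin 3) : E3 →L[ℝ] ℝ).hasFDerivAt (x := x)
  refine HasFDerivAt.congr_fderiv (f := fun y : E3 => y 0) h ?_
  ext v
  simp [EuclideanSpace.inner_single_left]

lemma wake_nonneg (x : E3) : 0 ≤ wake x := by
  have h : |x 0| ≤ ‖x‖ := by
    have := abs_real_inner_le_norm (EuclideanSpace.single (0 : Fin 3) (1:ℝ)) x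
    simpa [EuclideanSpace.inner_single_left, EuclideanSpace.norm_single] using this
  have := neg_abs_le (x 0)
  unfold wake; linarith

lemma combo_norm {x : E3} (hx : x ≠ 0) :
    ‖(‖x‖⁻¹ : ℝ) • x + EuclideanSpace.single (0 : Fin 3) (1:ℝ)‖
      = Real.sqrt (2 * wake x / ‖x‖) := by
  set u : E3 := (‖x‖⁻¹ : ℝ) • x
  set e : E3 := EuclideanSpace.single (0 : Fin 3) (1:ℝ)
  have hr : (0:ℝ) < ‖x‖ := norm_pos_iff.mpr hx
  have hu : ‖u‖ = 1 := by
    simp [u, norm_smul, abs_of_pos (inv_pos.mpr hr), inv_mul_cancel₀ hr.ne']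
  have he : ‖e‖ = 1 := by simp [e, EuclideanSpace.norm_single]
  have hue : (inner ℝ u e : ℝ) = ‖x‖⁻¹ * x 0 := by
    simp [u, e, real_inner_smul_left, EuclideanSpace.inner_single_right]
  have hsq : ‖u + e‖ ^ 2 = 2 * wake x / ‖x‖ := by
    rw [norm_add_sq_real, hu, he, hue]
    field_simp [wake]
    rw [wake]
    ring
  rw [← hsq, Real.sqrt_sq (norm_nonneg _)]

lemma key_ineq {lam : ℝ} (hlam : 0 < lam) :
    2⁻¹ * lam * Real.sqrt 2 ≤ (1 + lam) * Real.sqrt lam := by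
  have hsqrt2 : Real.sqrt 2 ≤ 2 := by
    nlinarith [Real.sq_sqrt (by norm_num : (0:ℝ) ≤ 2), Real.sqrt_nonneg 2]
  have hl : 0 < Real.sqrt lam := Real.sqrt_pos.mpr hlam
  have hl2 : Real.sqrt lam ^ 2 = lam := Real.sq_sqrt hlam.le
  have e1 : 2⁻¹ * lam * Real.sqrt 2 ≤ lam := by nlinarith [hlam.le]
  have e2 : lam ≤ (1 + lam) * Real.sqrt lam := by
    nlinarith [mul_nonneg hl.le (sq_nonneg (Real.sqrt lam - 1)), hl2, hlam.le, hl.le]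
  linarith

/-- **Pointwise estimate of `∇Φ₀`:** for `λ > 0` there is `C = C(λ) > 0` with
`|∇Φ₀(x)| ≤ C(|x|⁻² + |x|^(−3/2) s(λx)^(1/2)) e^(−s(λx)/2)` for all `x ≠ 0`. -/
theorem grad_Phi0_pointwise_estimate (lam : ℝ) (hlam : 0 < lam) :
    ∃ C > 0, ∀ x : E3, x ≠ 0 →
      ‖fderiv ℝ (Phi0 lam) x‖ ≤
        C * (‖x‖ ^ (-(2 : ℝ)) + ‖x‖ ^ (-(3/2 : ℝ)) * (wake (lam • x)) ^ ((1:ℝ)/2))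
          * Real.exp (-(wake (lam • x)) / 2) := by
  have hpi : (0:ℝ) < Real.pi := Real.pi_pos
  refine ⟨(1 + lam) / (4 * Real.pi), by positivity, fun x hx => ?_⟩
  set r : ℝ := ‖x‖ with hrdef
  have hr : (0:ℝ) < r := norm_pos_iff.mpr hx
  have hne : r ≠ 0 := hr.ne'
  set s : ℝ := wake x with hsdef
  have hs0 : 0 ≤ s := wake_nonneg x
  set u : E3 := (‖x‖⁻¹ : ℝ) • x with hudef
  set e : E3 := EuclideanSpace.single (0 : Fin 3) (1:ℝ) with hedef
  have hu1 : ‖u‖ = 1 := by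
    simp [hudef, norm_smul, abs_of_pos (inv_pos.mpr hr), inv_mul_cancel₀ hne, inv_mul_cancel₀ (norm_ne_zero_iff.mpr hx)]
  -- wake of scaled point
  have hwy : ∀ y : E3, wake (lam • y) = lam * ‖y‖ + lam * y 0 := by
    intro y
    simp [wake, norm_smul, abs_of_pos hlam]
  have hws : wake (lam • x) = lam * s := by
    rw [hwy x, hsdef, wake]; ring
  -- rewrite Phi0
  have hF : Phi0 lam = fun y : E3 =>
      (4 * Real.pi)⁻¹ * (‖y‖⁻¹ * Real.exp ((-(2:ℝ))⁻¹ * (lam * ‖y‖ + lam * y 0))) := by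
    funext y
    rw [Phi0, hwy y]
    rw [show -(lam * ‖y‖ + lam * y 0) / 2 = (-(2:ℝ))⁻¹ * (lam * ‖y‖ + lam * y 0) by ring]
    rw [mul_inv, mul_assoc]
  -- derivatives
  have hn := norm_hasFDerivAt hx
  have hp := coord_hasFDerivAt x
  set N : E3 →L[ℝ] ℝ := innerSL ℝ u with hNdef
  set L : E3 →L[ℝ] ℝ := innerSL ℝ e with hLdef
  have hsfun : HasFDerivAt (fun y : E3 => lam * ‖y‖ + lam * y 0)
      (lam • N + lam • L) x := (hn.const_mul lam).add (hp.const_mul lam)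
  have harg := hsfun.const_mul (-(2:ℝ))⁻¹
  have hexp := harg.exp
  have hinv := (hasDerivAt_inv hne).comp_hasFDerivAt x hn
  have hmul := hinv.mul hexp
  have htot := hmul.const_mul ((4 * Real.pi)⁻¹)
  set G : ℝ := Real.exp ((-(2:ℝ))⁻¹ * (lam * ‖x‖ + lam * x 0)) with hGdef
  have hGpos : 0 < G := Real.exp_pos _
  have hGeq : G = Real.exp (-(wake (lam • x)) / 2) := by
    rw [hGdef, hwy x]; congr 1; ring
  have hfder : fderiv ℝ (Phi0 lam) x =
      (4 * Real.pi)⁻¹ •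
        (‖x‖⁻¹ • (G • ((-(2:ℝ))⁻¹ • (lam • N + lam • L))) +
          G • (-(‖x‖ ^ 2)⁻¹ • N)) := by
    rw [hF]
    exact htot.fderiv
  -- represent derivative as innerSL of a single vector
  set w : E3 := (4 * Real.pi)⁻¹ •
      (((‖x‖⁻¹ * G * (-(2:ℝ))⁻¹ * lam) • (u + e)) + ((G * (-(‖x‖ ^ 2)⁻¹)) • u))
    with hwdef
  have hDw : (4 * Real.pi)⁻¹ •
        (‖x‖⁻¹ • (G • ((-(2:ℝ))⁻¹ • (lam • N + lam • L))) +
          G • (-(‖x‖ ^ 2)⁻¹ • N)) = innerSL ℝ w := by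
    ext v
    simp [hwdef, hNdef, hLdef, inner_add_left, real_inner_smul_left]
    ring
  -- norm bound on w
  have hcombo : ‖u + e‖ = Real.sqrt (2 * s / r) := combo_norm hx
  have habs1 : |‖x‖⁻¹ * G * (-(2:ℝ))⁻¹ * lam| = r⁻¹ * G * 2⁻¹ * lam := by
    rw [abs_mul, abs_mul, abs_mul, abs_of_pos (inv_pos.mpr hr), abs_of_pos hGpos,
      abs_of_pos hlam]
    norm_num
  have habs2 : |G * (-(‖x‖ ^ 2)⁻¹)| = G * (r ^ 2)⁻¹ := by
    rw [abs_mul, abs_of_pos hGpos, abs_neg, abs_of_pos (inv_pos.mpr (pow_pos hr 2))]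
  have hDle : ‖fderiv ℝ (Phi0 lam) x‖ ≤
      (4 * Real.pi)⁻¹ *
        (r⁻¹ * G * 2⁻¹ * lam * Real.sqrt (2 * s / r) + G * (r ^ 2)⁻¹) := by
    rw [hfder, hDw, innerSL_apply_norm, hwdef, norm_smul, Real.norm_eq_abs,
      abs_of_pos (inv_pos.mpr (by positivity : (0:ℝ) < 4 * Real.pi))]
    apply mul_le_mul_of_nonneg_left _ (by positivity)
    calc ‖(‖x‖⁻¹ * G * (-(2:ℝ))⁻¹ * lam) • (u + e) + (G * (-(‖x‖ ^ 2)⁻¹)) • u‖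
        ≤ ‖(‖x‖⁻¹ * G * (-(2:ℝ))⁻¹ * lam) • (u + e)‖ + ‖(G * (-(‖x‖ ^ 2)⁻¹)) • u‖ :=
          norm_add_le _ _
      _ = r⁻¹ * G * 2⁻¹ * lam * Real.sqrt (2 * s / r) + G * (r ^ 2)⁻¹ := by
          rw [norm_smul, norm_smul, Real.norm_eq_abs, Real.norm_eq_abs, habs1, habs2,
            hcombo, hu1, mul_one]
  -- rpow rewrites
  set a : ℝ := Real.sqrt r with hadef
  set b : ℝ := Real.sqrt s with hbdef
  set l : ℝ := Real.sqrt lam with hldef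
  have ha : 0 < a := Real.sqrt_pos.mpr hr
  have hb : 0 ≤ b := Real.sqrt_nonneg _
  have hl : 0 < l := Real.sqrt_pos.mpr hlam
  have ha2 : a ^ 2 = r := Real.sq_sqrt hr.le
  have hl2 : l ^ 2 = lam := Real.sq_sqrt hlam.le
  have hsqrt_eq : Real.sqrt (2 * s / r) = Real.sqrt 2 * b / a := by
    rw [Real.sqrt_div (by positivity), Real.sqrt_mul (by norm_num)]
  have hr2 : r ^ (-(2:ℝ)) = (r ^ 2)⁻¹ := by
    rw [Real.rpow_neg hr.le, show ((2:ℝ)) = ((2:ℕ):ℝ) by norm_num, Real.rpow_natCast]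
  have hr32 : r ^ (-(3/2 : ℝ)) = r⁻¹ * a⁻¹ := by
    rw [Real.rpow_neg hr.le, show (3/2 : ℝ) = 1 + 1/2 by norm_num,
      Real.rpow_add hr, Real.rpow_one, ← Real.sqrt_eq_rpow, ← hadef, mul_inv]
  have hls : (lam * s) ^ ((1:ℝ)/2) = l * b := by
    rw [show ((1:ℝ)/2) = (1/2 : ℝ) by norm_num, ← Real.sqrt_eq_rpow,
      Real.sqrt_mul hlam.le]
  have key : 2⁻¹ * lam * Real.sqrt 2 ≤ (1 + lam) * l := key_ineq hlam
  -- conclude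
  rw [← hGeq, hws, hr2, hr32, hls]
  calc ‖fderiv ℝ (Phi0 lam) x‖
      ≤ (4 * Real.pi)⁻¹ *
        (r⁻¹ * G * 2⁻¹ * lam * (Real.sqrt 2 * b / a) + G * (r ^ 2)⁻¹) := by
        rw [← hsqrt_eq]; exact hDle
    _ = ((4 * Real.pi)⁻¹ * (r ^ 2)⁻¹ +
          (2⁻¹ * lam * Real.sqrt 2) * (r⁻¹ * b * a⁻¹ * (4 * Real.pi)⁻¹)) * G := by
        ring
    _ ≤ ((1 + lam) / (4 * Real.pi) * (r ^ 2)⁻¹ +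
          ((1 + lam) * l) * (r⁻¹ * b * a⁻¹ * (4 * Real.pi)⁻¹)) * G := by
        apply mul_le_mul_of_nonneg_right _ hGpos.le
        apply add_le_add
        · apply mul_le_mul_of_nonneg_right _ (by positivity)
          rw [div_eq_mul_inv]
          have : (0:ℝ) ≤ (4 * Real.pi)⁻¹ := by positivity
          nlinarith [this]
        · exact mul_le_mul_of_nonneg_right key (by positivity)
    _ = (1 + lam) / (4 * Real.pi) * ((r ^ 2)⁻¹ + r⁻¹ * a⁻¹ * (l * b)) * G := by
        ring

end
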